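/- There exist a constant K₂ ∈ (0,1) and a positive constant C_{K₂,λ} such that for all x,y ∈ ℝ₊ with y < K₂·x, one has R_{Δ_λ}(x,y) ≤ −C_{K₂,λ} / x^{2λ+1}. -/

import Mathlib

open MeasureTheory Real Set Filter

/-- The Riesz kernel `R_{Δ_λ}(x,y)`. -/
noncomputable def rieszKernel (lam x y : ℝ) : ℝ :=
  -(2 * lam / π) * ∫ θ in (0:ℝ)..π,
    ((x - y * Real.cos θ) * Real.sin θ ^ (2*lam - 1)) /
      ((x^2 + y^2 - 2*x*y*Real.cos θ) ^ (lam + 1))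


lemma sin_rpow_integrable {p : ℝ} (hp : -1 < p) :
    IntervalIntegrable (fun θ => Real.sin θ ^ p) volume 0 π := by
  have h1 : IntervalIntegrable (fun θ => Real.sin θ ^ p) volume 0 (π / 2) := by
    rcases le_or_gt 0 p with hp0 | hp0
    · exact (Real.continuous_sin.rpow_const fun x => Or.inr hp0).intervalIntegrable _ _
    · have hc : (0:ℝ) < 2 / π := by positivity
      have hint : IntervalIntegrable (fun θ : ℝ => (2 / π * θ) ^ p) volume 0 (π / 2) := by
        have := (intervalIntegral.intervalIntegrable_rpow' hp (a := 0) (b := 1)).comp_mul_left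
          (c := 2 / π)
        simpa [one_div_div] using this
      refine hint.mono_fun ((Real.continuous_sin.measurable.pow_const p).aestronglyMeasurable) ?_
      filter_upwards [ae_restrict_mem measurableSet_uIoc] with θ hθ
      rw [uIoc_of_le (by positivity : (0:ℝ) ≤ π / 2)] at hθ
      have hθ0 : 0 < θ := hθ.1
      have hθπ : θ ≤ π / 2 := hθ.2
      have hs0 : 0 ≤ Real.sin θ := Real.sin_nonneg_of_nonneg_of_le_pi hθ0.le
        (hθπ.trans (by linarith [Real.pi_pos]))
      have hm : 2 / π * θ ≤ Real.sin θ := Real.mul_le_sin hθ0.le hθπ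
      have h2 : Real.sin θ ^ p ≤ (2 / π * θ) ^ p :=
        Real.rpow_le_rpow_of_nonpos (by positivity) hm hp0.le
      simp only [Real.norm_eq_abs]
      rw [abs_of_nonneg (Real.rpow_nonneg hs0 p),
        abs_of_nonneg (Real.rpow_nonneg (by positivity) p)]
      exact h2
  have h2 : IntervalIntegrable (fun θ => Real.sin θ ^ p) volume (π / 2) π := by
    have := (h1.comp_sub_left π).symm
    simpa [Real.sin_pi_sub, sub_half] using this
  exact h1.trans h2

/-- Upper bound: there exist `K₂ ∈ (0,1)` and `C > 0` such that for `y < K₂ x`,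
`R_{Δ_λ}(x,y) ≤ -C / x^{2λ+1}`. -/
theorem riesz_kernel_upper_bound_near_zero (lam : ℝ) (hlam : 0 < lam) :
    ∃ K₂ C : ℝ, 0 < K₂ ∧ K₂ < 1 ∧ 0 < C ∧ ∀ x y : ℝ, 0 < x → 0 < y → y < K₂ * x →
      rieszKernel lam x y ≤ -C / x ^ (2*lam + 1) := by
  have hp : (-1:ℝ) < 2 * lam - 1 := by linarith
  set p : ℝ := 2 * lam - 1 with hpdef
  set I : ℝ := ∫ θ in (0:ℝ)..π, Real.sin θ ^ p with hIdef
  have hI_int := sin_rpow_integrable hp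
  have hI_pos : 0 < I :=
    intervalIntegral.intervalIntegral_pos_of_pos_on hI_int
      (fun θ hθ => Real.rpow_pos_of_pos (Real.sin_pos_of_pos_of_lt_pi hθ.1 hθ.2) _) Real.pi_pos
  have h4pos : (0:ℝ) < (4:ℝ) ^ (lam + 1) := Real.rpow_pos_of_pos (by norm_num) _
  refine ⟨1/2, lam * I / (π * (4:ℝ) ^ (lam + 1)), by norm_num, by norm_num, ?_, ?_⟩
  · exact div_pos (mul_pos hlam hI_pos) (mul_pos Real.pi_pos h4pos)
  intro x y hx hy hxy
  rw [show (1:ℝ)/2 * x = x / 2 by ring] at hxy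
  have hyx : y < x := hxy.trans (by linarith)
  have hDpos : ∀ θ : ℝ, 0 < x^2 + y^2 - 2*x*y*Real.cos θ := by
    intro θ
    nlinarith [Real.cos_le_one θ, mul_pos hx hy, pow_pos (show (0:ℝ) < x - y by linarith) 2,
      mul_nonneg (mul_pos hx hy).le (sub_nonneg.2 (Real.cos_le_one θ))]
  have h_cont : Continuous fun θ =>
      (x - y * Real.cos θ) / (x^2 + y^2 - 2*x*y*Real.cos θ) ^ (lam + 1) := by
    apply Continuous.div
    · fun_prop
    · exact (by fun_prop : Continuous fun θ : ℝ => x^2 + y^2 - 2*x*y*Real.cos θ).rpow_const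
        fun θ => Or.inr (by linarith)
    · exact fun θ => (Real.rpow_pos_of_pos (hDpos θ) _).ne'
  have hf_int : IntervalIntegrable (fun θ =>
      ((x - y * Real.cos θ) * Real.sin θ ^ p) / (x^2 + y^2 - 2*x*y*Real.cos θ) ^ (lam + 1))
      volume 0 π := by
    have h := hI_int.continuousOn_mul h_cont.continuousOn
    have heq : (fun θ =>
        ((x - y * Real.cos θ) * Real.sin θ ^ p) / (x^2 + y^2 - 2*x*y*Real.cos θ) ^ (lam + 1)) =
        fun θ => ((x - y * Real.cos θ) / (x^2 + y^2 - 2*x*y*Real.cos θ) ^ (lam + 1)) *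
          Real.sin θ ^ p := by
      funext θ; rw [mul_div_right_comm]
    rw [heq]; exact h
  set c : ℝ := (x/2) / (4*x^2) ^ (lam + 1) with hcdef
  have hg_int : IntervalIntegrable (fun θ => c * Real.sin θ ^ p) volume 0 π := hI_int.const_mul c
  have h_mono : ∀ θ ∈ Icc (0:ℝ) π, c * Real.sin θ ^ p ≤
      ((x - y * Real.cos θ) * Real.sin θ ^ p) / (x^2 + y^2 - 2*x*y*Real.cos θ) ^ (lam + 1) := by
    intro θ hθ
    have hs : 0 ≤ Real.sin θ ^ p :=
      Real.rpow_nonneg (Real.sin_nonneg_of_nonneg_of_le_pi hθ.1 hθ.2) _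
    rw [mul_div_right_comm]
    refine mul_le_mul_of_nonneg_right ?_ hs
    have hnum : x / 2 ≤ x - y * Real.cos θ := by
      nlinarith [mul_le_of_le_one_right hy.le (Real.cos_le_one θ)]
    have hD4 : x^2 + y^2 - 2*x*y*Real.cos θ ≤ 4 * x^2 := by
      nlinarith [Real.neg_one_le_cos θ, mul_pos hx hy, sq_nonneg (x - y), sq_nonneg (x + y)]
    exact div_le_div₀ (by linarith) hnum (Real.rpow_pos_of_pos (hDpos θ) _)
      (Real.rpow_le_rpow (hDpos θ).le hD4 (by linarith))
  have key : c * I ≤ ∫ θ in (0:ℝ)..π,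
      ((x - y * Real.cos θ) * Real.sin θ ^ p) / (x^2 + y^2 - 2*x*y*Real.cos θ) ^ (lam + 1) := by
    have h := intervalIntegral.integral_mono_on Real.pi_pos.le hg_int hf_int h_mono
    rwa [intervalIntegral.integral_const_mul] at h
  have hX : (0:ℝ) < x ^ (2*lam + 1) := Real.rpow_pos_of_pos hx _
  have hx2 : (x^2 : ℝ) ^ (lam + 1) = x ^ (2*lam + 1) * x := by
    rw [← Real.rpow_natCast x 2, ← Real.rpow_mul hx.le]
    rw [show ((2:ℕ):ℝ) * (lam + 1) = (2*lam + 1) + 1 by push_cast; ring,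
      Real.rpow_add hx, Real.rpow_one]
  have h4 : ((4:ℝ) * x^2) ^ (lam + 1) = (4:ℝ) ^ (lam + 1) * (x ^ (2*lam + 1) * x) := by
    rw [Real.mul_rpow (by norm_num) (sq_nonneg x), hx2]
  have hcoef : (0:ℝ) < 2 * lam / π := by positivity
  have heqC : -(2 * lam / π) * (c * I) = -(lam * I / (π * (4:ℝ) ^ (lam + 1))) / x ^ (2*lam + 1) := by
    rw [hcdef, h4]
    field_simp
  calc rieszKernel lam x y
      ≤ -(2 * lam / π) * (c * I) := by
        rw [rieszKernel]
        rw [neg_mul, neg_mul, neg_le_neg_iff]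
        exact mul_le_mul_of_nonneg_left key hcoef.le
    _ = -(lam * I / (π * (4:ℝ) ^ (lam + 1))) / x ^ (2*lam + 1) := heqC
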